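/- If n is even and m is odd, then no string x of length n over {A,C,G,T} with GC-content m satisfies x = x^r; otherwise (n odd, or both n and m with compatible parity), the number of such strings is C(⌊n/2⌋, ⌊m/2⌋)·2^{⌈n/2⌉}. -/

import Mathlib

open Finset

/-- The reverse of a DNA string. -/
def dnaRev {n : ℕ} (x : Fin n → Fin 4) : Fin n → Fin 4 := fun i => x i.rev

/-- GC-content: the number of coordinates equal to `G` or `C` (here `1` or `2`). -/
def gcContent {n : ℕ} (x : Fin n → Fin 4) : ℕ :=
  (Finset.univ.filter (fun i => x i = 1 ∨ x i = 2)).card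

lemma aux_count_gc (h k : ℕ) :
    (univ.filter (fun y : Fin h → Fin 4 => gcContent y = k)).card
      = Nat.choose h k * 2 ^ h := by
  classical
  rw [Finset.card_eq_sum_card_fiberwise
    (f := fun y : Fin h → Fin 4 => univ.filter (fun i => y i = 1 ∨ y i = 2))
    (t := Finset.powersetCard k (univ : Finset (Fin h)))
    (by intro y hy
        simp only [coe_filter, Set.mem_setOf_eq, mem_coe, mem_filter, mem_univ, true_and] at hy ⊢
        rw [Finset.mem_powersetCard_univ]
        exact hy)]
  have key : ∀ S ∈ Finset.powersetCard k (univ : Finset (Fin h)),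
      ((univ.filter (fun y : Fin h → Fin 4 => gcContent y = k)).filter
        (fun y => univ.filter (fun i => y i = 1 ∨ y i = 2) = S)).card = 2 ^ h := by
    intro S hS
    rw [Finset.mem_powersetCard_univ] at hS
    have hmem : ∀ (a : Fin 4) (b : Bool),
        (a ∈ (if b then ({1,2} : Finset (Fin 4)) else {0,3})) ↔
          (if b then (a = 1 ∨ a = 2) else ¬(a = 1 ∨ a = 2)) := by decide
    have hset : (univ.filter (fun y : Fin h → Fin 4 => gcContent y = k)).filter
        (fun y => univ.filter (fun i => y i = 1 ∨ y i = 2) = S)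
        = Fintype.piFinset (fun i => if i ∈ S then ({1,2} : Finset (Fin 4)) else {0,3}) := by
      ext y
      simp only [mem_filter, mem_univ, true_and, Fintype.mem_piFinset]
      constructor
      · rintro ⟨-, hF⟩ i
        have hi := Finset.ext_iff.mp hF i
        simp only [mem_filter, mem_univ, true_and] at hi
        by_cases hiS : i ∈ S
        · simpa [hiS, hmem _ true] using hi.mpr hiS
        · have h2 : ¬(y i = 1 ∨ y i = 2) := fun hh => hiS (hi.mp hh)
          have := (hmem (y i) false).mpr (by simpa using h2)
          simpa [hiS] using this
      · intro hy
        have hF : univ.filter (fun i => y i = 1 ∨ y i = 2) = S := by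
          ext i
          simp only [mem_filter, mem_univ, true_and]
          by_cases hiS : i ∈ S
          · have := (hmem (y i) true).mp (by simpa [hiS] using hy i)
            simpa [hiS] using this
          · have := (hmem (y i) false).mp (by simpa [hiS] using hy i)
            have h3 : ¬(y i = 1 ∨ y i = 2) := by simpa using this
            simp only [hiS, iff_false]
            exact h3
        refine ⟨?_, hF⟩
        show (univ.filter (fun i => y i = 1 ∨ y i = 2)).card = k
        rw [hF, hS]
    rw [hset, Fintype.card_piFinset]
    have : ∀ i : Fin h, ((if i ∈ S then ({1,2} : Finset (Fin 4)) else {0,3})).card = 2 := by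
      intro i; by_cases hiS : i ∈ S <;> simp [hiS]
    rw [Finset.prod_congr rfl (fun i _ => this i), Finset.prod_const, card_univ, Fintype.card_fin]
  rw [Finset.sum_congr rfl key, Finset.sum_const, Finset.card_powersetCard, card_univ,
    Fintype.card_fin, smul_eq_mul]

def dnaPhi (n : ℕ) (y : Fin ((n+1)/2) → Fin 4) : Fin n → Fin 4 :=
  fun i => y ⟨min i.val (n - 1 - i.val), by have := i.isLt; omega⟩

lemma dnaPhi_lt {n : ℕ} (y : Fin ((n+1)/2) → Fin 4) (i : Fin n) (hi : i.val < (n+1)/2) :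
    dnaPhi n y i = y ⟨i.val, hi⟩ := by
  unfold dnaPhi; congr 1; apply Fin.ext; have := i.isLt; simp; omega

lemma dnaPhi_ge {n : ℕ} (y : Fin ((n+1)/2) → Fin 4) (i : Fin n) (hi : ¬ i.val < (n+1)/2) :
    dnaPhi n y i = y ⟨n - 1 - i.val, by have := i.isLt; omega⟩ := by
  unfold dnaPhi; congr 1; apply Fin.ext; have := i.isLt; simp; omega

lemma card_filter_lt {h N : ℕ} (hNh : N ≤ h) (P : Fin h → Prop) [DecidablePred P] :
    (univ.filter (fun j : Fin h => j.val < N ∧ P j)).card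
      = (univ.filter (fun i : Fin N => P (Fin.castLE hNh i))).card := by
  rw [← Finset.card_map (Fin.castLEEmb hNh)]
  congr 1
  ext j
  simp only [Finset.mem_map, mem_filter, mem_univ, true_and, Fin.castLEEmb_apply]
  constructor
  · rintro ⟨hj, hP⟩
    refine ⟨⟨j.val, hj⟩, ?_, Fin.ext rfl⟩
    convert hP using 2
    exact Fin.ext rfl
  · rintro ⟨i, hP, rfl⟩
    exact ⟨i.isLt, hP⟩

lemma gc_dnaPhi {n : ℕ} (hn : 0 < n) (y : Fin ((n+1)/2) → Fin 4) :
    gcContent (dnaPhi n y) = gcContent y +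
      (univ.filter (fun j : Fin ((n+1)/2) => j.val < n/2 ∧ (y j = 1 ∨ y j = 2))).card := by
  classical
  unfold gcContent
  have hsplit := Finset.card_filter_add_card_filter_not
    (s := univ.filter (fun i : Fin n => dnaPhi n y i = 1 ∨ dnaPhi n y i = 2))
    (p := fun i : Fin n => i.val < (n+1)/2)
  rw [Finset.filter_filter, Finset.filter_filter] at hsplit
  rw [← hsplit]
  congr 1
  · -- first part = gcContent y
    rw [← Finset.card_map (Fin.castLEEmb (show (n+1)/2 ≤ n by omega))]
    congr 1
    ext i
    simp only [Finset.mem_map, mem_filter, mem_univ, true_and, Fin.castLEEmb_apply]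
    constructor
    · rintro ⟨hgc, hi⟩
      refine ⟨⟨i.val, hi⟩, ?_, Fin.ext rfl⟩
      rwa [dnaPhi_lt y i hi] at hgc
    · rintro ⟨j, hgc, rfl⟩
      have hi : (Fin.castLE (show (n+1)/2 ≤ n by omega) j).val < (n+1)/2 := j.isLt
      refine ⟨?_, hi⟩
      rw [dnaPhi_lt y _ hi]
      convert hgc using 3 <;> exact Fin.ext rfl
  · -- second part
    rw [← Finset.card_map ⟨fun j : Fin ((n+1)/2) => (⟨n - 1 - j.val, by have := j.isLt; omega⟩ : Fin n),
        by intro a b hab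
           have ha := a.isLt; have hb := b.isLt
           have hv : n - 1 - a.val = n - 1 - b.val := congrArg Fin.val hab
           apply Fin.ext; omega⟩]
    congr 1
    ext i
    simp only [Finset.mem_map, mem_filter, mem_univ, true_and, Function.Embedding.coeFn_mk]
    constructor
    · rintro ⟨hgc, hi⟩
      have hival := i.isLt
      refine ⟨⟨n - 1 - i.val, by omega⟩, ⟨⟨show n - 1 - i.val < n/2 by omega, ?_⟩,
        Fin.ext (show n - 1 - (n - 1 - i.val) = i.val by omega)⟩⟩
      rw [dnaPhi_ge y i hi] at hgc
      exact hgc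
    · rintro ⟨j, ⟨hjN, hgc⟩, rfl⟩
      have hj := j.isLt
      have hni : ¬ ((⟨n - 1 - j.val, by omega⟩ : Fin n)).val < (n+1)/2 := by
        show ¬ n - 1 - j.val < (n+1)/2; omega
      refine ⟨?_, hni⟩
      show dnaPhi n y ⟨n - 1 - j.val, by omega⟩ = 1 ∨ dnaPhi n y ⟨n - 1 - j.val, by omega⟩ = 2
      rw [dnaPhi_ge y _ hni]
      convert hgc using 3 <;>
        exact Fin.ext (show n - 1 - (n - 1 - j.val) = j.val by omega)

lemma dnaPhi_palindrome {n : ℕ} (y : Fin ((n+1)/2) → Fin 4) :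
    dnaPhi n y = dnaRev (dnaPhi n y) := by
  funext i
  show dnaPhi n y i = dnaPhi n y i.rev
  unfold dnaPhi
  congr 1; apply Fin.ext; have := i.isLt; simp [Fin.val_rev]; omega

lemma dnaPhi_restrict {n : ℕ} (hn : 0 < n) (y : Fin ((n+1)/2) → Fin 4) :
    (fun j : Fin ((n+1)/2) => dnaPhi n y (Fin.castLE (by omega) j)) = y := by
  funext j
  rw [dnaPhi_lt y _ (by exact j.isLt)]
  congr 1

lemma dnaPhi_reconstruct {n : ℕ} (hn : 0 < n) (x : Fin n → Fin 4) (hx : x = dnaRev x) :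
    dnaPhi n (fun j => x (Fin.castLE (by omega) j)) = x := by
  funext i
  by_cases hi : i.val < (n+1)/2
  · rw [dnaPhi_lt _ _ hi]
    congr 1
  · rw [dnaPhi_ge _ _ hi]
    conv_rhs => rw [hx]
    show x _ = x i.rev
    congr 1; apply Fin.ext; have := i.isLt; simp [Fin.val_rev]; omega


/-- The number of DNA strings of length `n` with GC-content `m` equal to their own
reverse is `0` if `n` is even and `m` is odd, and `C(⌊n/2⌋,⌊m/2⌋) · 2^(⌈n/2⌉)` otherwise. -/
theorem count_gc_self_reverse (n m : ℕ) (hn : 0 < n) (hm : 0 < m) (hmn : m ≤ n) :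
    (Finset.univ.filter
        (fun x : Fin n → Fin 4 => gcContent x = m ∧ x = dnaRev x)).card =
      if Even n ∧ Odd m then 0
      else Nat.choose (n / 2) (m / 2) * 2 ^ ((n + 1) / 2) := by
  classical
  have hle : (n+1)/2 ≤ n := by omega
  have hbij : (Finset.univ.filter
        (fun x : Fin n → Fin 4 => gcContent x = m ∧ x = dnaRev x)).card =
      (univ.filter (fun y : Fin ((n+1)/2) → Fin 4 =>
        gcContent y + (univ.filter (fun j : Fin ((n+1)/2) =>
          j.val < n/2 ∧ (y j = 1 ∨ y j = 2))).card = m)).card := by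
    apply Finset.card_nbij' (i := fun x => fun j : Fin ((n+1)/2) => x (Fin.castLE hle j))
      (j := dnaPhi n)
    · intro x hx
      simp only [coe_filter, Set.mem_setOf_eq, mem_coe, mem_filter, mem_univ, true_and] at hx ⊢
      have h1 := gc_dnaPhi hn (fun j : Fin ((n+1)/2) => x (Fin.castLE hle j))
      rw [dnaPhi_reconstruct hn x hx.2] at h1
      omega
    · intro y hy
      simp only [coe_filter, Set.mem_setOf_eq, mem_coe, mem_filter, mem_univ, true_and] at hy ⊢
      refine ⟨?_, dnaPhi_palindrome y⟩
      rw [gc_dnaPhi hn]; exact hy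
    · intro x hx
      simp only [coe_filter, Set.mem_setOf_eq, mem_coe, mem_filter, mem_univ, true_and] at hx
      exact dnaPhi_reconstruct hn x hx.2
    · intro y _
      exact dnaPhi_restrict hn y
  rw [hbij]
  clear hbij
  by_cases hpar : Even n
  · -- n even
    have hn2 : n % 2 = 0 := Nat.even_iff.mp hpar
    have hlow : ∀ y : Fin ((n+1)/2) → Fin 4,
        (univ.filter (fun j : Fin ((n+1)/2) => j.val < n/2 ∧ (y j = 1 ∨ y j = 2))).card
          = gcContent y := by
      intro y
      unfold gcContent
      congr 1
      ext j
      simp only [mem_filter, mem_univ, true_and]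
      have := j.isLt
      constructor
      · exact fun h => h.2
      · exact fun h => ⟨by omega, h⟩
    have hfe : (univ.filter (fun y : Fin ((n+1)/2) → Fin 4 =>
        gcContent y + (univ.filter (fun j : Fin ((n+1)/2) =>
          j.val < n/2 ∧ (y j = 1 ∨ y j = 2))).card = m))
        = univ.filter (fun y : Fin ((n+1)/2) → Fin 4 => gcContent y + gcContent y = m) := by
      ext y
      simp only [mem_filter, mem_univ, true_and]
      rw [hlow y]
    rw [hfe]
    by_cases hmo : Odd m
    · rw [if_pos ⟨hpar, hmo⟩]
      have hm2 : m % 2 = 1 := Nat.odd_iff.mp hmo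
      rw [Finset.card_eq_zero, Finset.eq_empty_iff_forall_notMem]
      intro y hy
      simp only [mem_filter, mem_univ, true_and] at hy
      omega
    · rw [if_neg (by tauto)]
      have hm2 : m % 2 = 0 := Nat.even_iff.mp (Nat.not_odd_iff_even.mp hmo)
      have hfe2 : (univ.filter (fun y : Fin ((n+1)/2) → Fin 4 => gcContent y + gcContent y = m))
          = univ.filter (fun y : Fin ((n+1)/2) → Fin 4 => gcContent y = m/2) := by
        ext y
        simp only [mem_filter, mem_univ, true_and]
        constructor
        · intro h; omega
        · intro h; omega
      rw [hfe2, aux_count_gc]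
      have : (n+1)/2 = n/2 := by omega
      rw [this]
  · -- n odd
    have hn2 : n % 2 = 1 := Nat.odd_iff.mp (Nat.not_even_iff_odd.mp hpar)
    rw [if_neg (by tauto)]
    have h2 : (n+1)/2 = n/2 + 1 := by omega
    have hNle : n/2 ≤ (n+1)/2 := by omega
    set lastI : Fin ((n+1)/2) := ⟨n/2, by omega⟩ with hlastI
    have hjlast : ∀ j : Fin ((n+1)/2), ¬ j.val < n/2 → j = lastI := by
      intro j hj
      apply Fin.ext
      have := j.isLt
      show j.val = n/2
      omega
    have hdec : ∀ y : Fin ((n+1)/2) → Fin 4, gcContent y =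
        (univ.filter (fun j : Fin ((n+1)/2) => j.val < n/2 ∧ (y j = 1 ∨ y j = 2))).card
          + (if y lastI = 1 ∨ y lastI = 2 then 1 else 0) := by
      intro y
      unfold gcContent
      have hsplit := Finset.card_filter_add_card_filter_not
        (s := univ.filter (fun j : Fin ((n+1)/2) => y j = 1 ∨ y j = 2))
        (p := fun j : Fin ((n+1)/2) => j.val < n/2)
      rw [Finset.filter_filter, Finset.filter_filter] at hsplit
      rw [← hsplit]
      congr 1
      · congr 1
        ext j
        simp only [mem_filter, mem_univ, true_and]
        tauto
      · by_cases hl : y lastI = 1 ∨ y lastI = 2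
        · rw [if_pos hl, Finset.card_eq_one]
          refine ⟨lastI, ?_⟩
          ext j
          simp only [mem_filter, mem_univ, true_and, Finset.mem_singleton]
          constructor
          · rintro ⟨hP, hjn⟩; exact hjlast j hjn
          · rintro rfl
            exact ⟨hl, by show ¬ (n/2 < n/2); omega⟩
        · rw [if_neg hl, Finset.card_eq_zero, Finset.eq_empty_iff_forall_notMem]
          intro j hj
          simp only [mem_filter, mem_univ, true_and] at hj
          exact hl ((hjlast j hj.2) ▸ hj.1)
    have hT : ∀ a : Fin 4, ¬(a = 1 ∨ a = 2) ↔ (a ∈ ({0,3} : Finset (Fin 4))) := by decide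
    have hT' : ∀ a : Fin 4, (a = 1 ∨ a = 2) ↔ (a ∈ ({1,2} : Finset (Fin 4))) := by decide
    set T : Finset (Fin 4) := if m % 2 = 1 then ({1,2} : Finset (Fin 4)) else {0,3} with hTdef
    have hrest : ∀ y : Fin ((n+1)/2) → Fin 4,
        (univ.filter (fun j : Fin ((n+1)/2) => j.val < n/2 ∧ (y j = 1 ∨ y j = 2))).card
          = gcContent (fun i : Fin (n/2) => y (Fin.castLE hNle i)) := by
      intro y
      exact card_filter_lt hNle (fun j => y j = 1 ∨ y j = 2)
    have hprod : (univ.filter (fun y : Fin ((n+1)/2) → Fin 4 =>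
        gcContent y + (univ.filter (fun j : Fin ((n+1)/2) =>
          j.val < n/2 ∧ (y j = 1 ∨ y j = 2))).card = m)).card
        = ((univ.filter (fun z : Fin (n/2) → Fin 4 => gcContent z = m/2)) ×ˢ T).card := by
      apply Finset.card_nbij'
        (i := fun y => (fun i : Fin (n/2) => y (Fin.castLE hNle i), y lastI))
        (j := fun p => fun j : Fin ((n+1)/2) =>
          if hj : j.val < n/2 then p.1 ⟨j.val, hj⟩ else p.2)
      · intro y hy
        simp only [coe_filter, Set.mem_setOf_eq, mem_coe, mem_filter, mem_univ, true_and] at hy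
        rw [hdec y, hrest y] at hy
        simp only [coe_product, Set.mem_prod, coe_filter, Set.mem_setOf_eq, mem_coe, Finset.mem_product, mem_filter, mem_univ, true_and]
        rw [← hrest y]
        by_cases hl : y lastI = 1 ∨ y lastI = 2
        · rw [if_pos hl] at hy
          have hm2 : m % 2 = 1 := by omega
          refine ⟨by rw [hrest y]; omega, ?_⟩
          rw [hTdef, if_pos hm2]
          exact (hT' _).mp hl
        · rw [if_neg hl] at hy
          have hm2 : m % 2 = 0 := by omega
          refine ⟨by rw [hrest y]; omega, ?_⟩
          rw [hTdef, if_neg (by omega)]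
          exact (hT _).mp hl
      · intro p hp
        simp only [coe_product, Set.mem_prod, coe_filter, Set.mem_setOf_eq, mem_coe, Finset.mem_product, mem_filter, mem_univ, true_and] at hp
        simp only [coe_filter, Set.mem_setOf_eq, mem_coe, mem_filter, mem_univ, true_and]
        set y : Fin ((n+1)/2) → Fin 4 := fun j =>
          if hj : j.val < n/2 then p.1 ⟨j.val, hj⟩ else p.2 with hydef
        have hrestrict : (fun i : Fin (n/2) => y (Fin.castLE hNle i)) = p.1 := by
          funext i
          show (if hj : (Fin.castLE hNle i).val < n/2 then p.1 ⟨(Fin.castLE hNle i).val, hj⟩ else p.2) = p.1 i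
          rw [dif_pos (show (Fin.castLE hNle i).val < n/2 from i.isLt)]
          exact congrArg p.1 (Fin.ext rfl)
        have hlast : y lastI = p.2 := by
          show (if hj : (lastI : Fin ((n+1)/2)).val < n/2 then p.1 ⟨_, hj⟩ else p.2) = p.2
          rw [dif_neg (show ¬ ((lastI : Fin ((n+1)/2)).val < n/2) from by show ¬ (n/2 < n/2); omega)]
        rw [hdec y, hrest y, hrestrict, hlast]
        have hgc1 : gcContent p.1 = m / 2 := hp.1
        by_cases hm2 : m % 2 = 1
        · rw [hTdef, if_pos hm2] at hp
          rw [if_pos ((hT' _).mpr hp.2)]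
          omega
        · rw [hTdef, if_neg hm2] at hp
          rw [if_neg ((hT _).mpr hp.2)]
          omega
      · intro y hy
        funext j
        by_cases hj : j.val < n/2
        · show (if hj' : j.val < n/2 then y (Fin.castLE hNle ⟨j.val, hj'⟩) else y lastI) = y j
          rw [dif_pos hj]
          exact congrArg y (Fin.ext rfl)
        · show (if hj' : j.val < n/2 then y (Fin.castLE hNle ⟨j.val, hj'⟩) else y lastI) = y j
          rw [dif_neg hj]
          exact congrArg y (hjlast j hj).symm
      · intro p hp
        refine Prod.ext ?_ ?_
        · funext i
          show (if hj : (Fin.castLE hNle i).val < n/2 then p.1 ⟨(Fin.castLE hNle i).val, hj⟩ else p.2) = p.1 i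
          rw [dif_pos (show (Fin.castLE hNle i).val < n/2 from i.isLt)]
          exact congrArg p.1 (Fin.ext rfl)
        · show (if hj : (lastI : Fin ((n+1)/2)).val < n/2 then p.1 ⟨_, hj⟩ else p.2) = p.2
          rw [dif_neg (show ¬ ((lastI : Fin ((n+1)/2)).val < n/2) from by show ¬ (n/2 < n/2); omega)]
    rw [hprod, Finset.card_product, aux_count_gc]
    have hTcard : T.card = 2 := by
      rw [hTdef]
      by_cases hm2 : m % 2 = 1
      · rw [if_pos hm2]; decide
      · rw [if_neg hm2]; decide
    rw [hTcard]
    rw [h2, pow_succ]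
    ring
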